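/- arXiv:1905.01891 — 2 statements merged into one kernel-verified Lean document; each statement's English description precedes it below -/
import Mathlib

section
/- For 0<r<α, the r-th moment μ_r(b)=∫_1^∞ x^r f_b(x) dx converges to α/(α-r) as b→∞. -/
open MeasureTheory Filter

/-- The tapered Pareto density. -/
noncomputable def taperedParetoDensity (α b x : ℝ) : ℝ :=
  if x < 1 then 0
  else if x ≤ b then α * x ^ (-α - 1)
  else b ^ (-α) * Real.exp (b - x)

/-- The `r`-th moment of the tapered Pareto distribution. -/
noncomputable def taperedParetoMoment (α r b : ℝ) : ℝ :=
  ∫ x in Set.Ioi (1 : ℝ), x ^ r * taperedParetoDensity α b x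

namespace TaperedAux

open Set Real

lemma pow_le (r b x : ℝ) (hr0 : 0 < r) (hb : 0 < b) (hx : b < x) :
    x ^ r ≤ b ^ r * Real.exp ((r/b) * (x - b)) := by
  have hx0 : 0 < x := hb.trans hx
  have hxb : 0 < x / b := div_pos hx0 hb
  have h1 : x ^ r = b ^ r * (x/b) ^ r := by
    rw [Real.div_rpow hx0.le hb.le]
    field_simp
  rw [h1]
  have h2 : (x/b) ^ r = Real.exp (r * Real.log (x/b)) := by
    rw [← Real.exp_log hxb, ← Real.exp_mul, Real.log_exp, mul_comm]
  rw [h2]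
  have h3 : Real.log (x/b) ≤ x/b - 1 := Real.log_le_sub_one_of_pos hxb
  have h4 : r * Real.log (x/b) ≤ (r/b) * (x - b) := by
    have : (r/b) * (x - b) = r * (x/b - 1) := by field_simp
    rw [this]
    exact mul_le_mul_of_nonneg_left h3 hr0.le
  exact mul_le_mul_of_nonneg_left (Real.exp_le_exp.mpr h4) (Real.rpow_nonneg hb.le r)

/-- pointwise bound on the tail integrand -/
lemma tail_ptwise (α r b x : ℝ) (hr0 : 0 < r) (hb : 0 < b) (hx : b < x) :
    x ^ r * (b ^ (-α) * Real.exp (b - x)) ≤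
      b ^ (r - α) * Real.exp (-(1 - r/b) * x) * Real.exp ((1 - r/b) * b) := by
  have key := pow_le r b x hr0 hb hx
  have hba : (0:ℝ) ≤ b ^ (-α) * Real.exp (b - x) := by positivity
  calc x ^ r * (b ^ (-α) * Real.exp (b - x))
      ≤ (b ^ r * Real.exp ((r/b) * (x - b))) * (b ^ (-α) * Real.exp (b - x)) :=
        mul_le_mul_of_nonneg_right key hba
    _ = (b ^ r * b ^ (-α)) * (Real.exp ((r/b) * (x - b)) * Real.exp (b - x)) := by ring
    _ = b ^ (r - α) * Real.exp (-(1 - r/b) * x) * Real.exp ((1 - r/b) * b) := by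
        have e1 : b ^ r * b ^ (-α) = b ^ (r - α) := by
          rw [← Real.rpow_add hb, sub_eq_add_neg]
        have e2 : Real.exp ((r/b) * (x - b)) * Real.exp (b - x) =
            Real.exp (-(1 - r/b) * x) * Real.exp ((1 - r/b) * b) := by
          rw [← Real.exp_add, ← Real.exp_add]
          congr 1
          field_simp
          ring
        rw [e1, e2]
        ring

/-- the dominating function is integrable on `Ioi b` -/
lemma g_integrable (α r b : ℝ) (hrb : r < b) (hb : 0 < b) :
    IntegrableOn (fun x => b ^ (r - α) * Real.exp (-(1 - r/b) * x) * Real.exp ((1 - r/b) * b))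
      (Ioi b) := by
  have hc : 0 < 1 - r/b := by
    rw [sub_pos, div_lt_one hb]; exact hrb
  have := (exp_neg_integrableOn_Ioi b hc)
  simpa [IntegrableOn, mul_comm, mul_assoc, mul_left_comm] using (this.const_mul (b ^ (r - α))).mul_const
    (Real.exp ((1 - r/b) * b))

lemma tail_integrand_nonneg (α r b x : ℝ) (hx : x ∈ Ioi b) (hb : 0 < b) :
    0 ≤ x ^ r * (b ^ (-α) * Real.exp (b - x)) := by
  have hx0 : 0 < x := hb.trans hx
  positivity

/-- integrability of the tail integrand -/
lemma tail_integrable (α r b : ℝ) (hr0 : 0 < r) (hrb : r < b) (hb : 0 < b) :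
    IntegrableOn (fun x => x ^ r * (b ^ (-α) * Real.exp (b - x))) (Ioi b) := by
  apply Integrable.mono (g_integrable α r b hrb hb)
  · have hcont : ContinuousOn (fun x : ℝ => x ^ r * (b ^ (-α) * Real.exp (b - x))) (Ioi b) := by
      apply ContinuousOn.mul
      · exact ContinuousOn.rpow_const continuousOn_id
          (fun x hx => Or.inl (ne_of_gt (hb.trans hx)))
      · exact Continuous.continuousOn (by continuity)
    exact hcont.aestronglyMeasurable measurableSet_Ioi
  · filter_upwards [ae_restrict_mem measurableSet_Ioi] with x hx
    rw [Real.norm_eq_abs, Real.norm_eq_abs,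
      abs_of_nonneg (tail_integrand_nonneg α r b x hx hb)]
    refine le_trans (tail_ptwise α r b x hr0 hb hx) (le_abs_self _)

/-- value bound for the tail integral -/
lemma tail_bound (α r b : ℝ) (hr0 : 0 < r) (hb2 : 2 ≤ b) (hbr : 2*r ≤ b) :
    (∫ x in Ioi b, x ^ r * (b ^ (-α) * Real.exp (b - x))) ≤ 2 * b ^ (r - α) := by
  have hb : 0 < b := lt_of_lt_of_le two_pos hb2
  have hrb : r < b := by linarith
  have hc : 0 < 1 - r/b := by rw [sub_pos, div_lt_one hb]; exact hrb
  have hI := tail_integrable α r b hr0 hrb hb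
  have hg := g_integrable α r b hrb hb
  have step1 : (∫ x in Ioi b, x ^ r * (b ^ (-α) * Real.exp (b - x))) ≤
      ∫ x in Ioi b, b ^ (r - α) * Real.exp (-(1 - r/b) * x) * Real.exp ((1 - r/b) * b) := by
    apply setIntegral_mono_on hI hg measurableSet_Ioi
    intro x hx
    exact tail_ptwise α r b x hr0 hb hx
  refine step1.trans ?_
  have hval : (∫ x in Ioi b, Real.exp (-(1 - r/b) * x)) = (1 - r/b)⁻¹ * Real.exp (-(1-r/b)*b) := by
    have h := integral_comp_mul_left_Ioi (fun u : ℝ => Real.exp (-u)) b hc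
    simp only [smul_eq_mul] at h
    have : (fun x : ℝ => Real.exp (-((1 - r/b) * x))) = fun x => Real.exp (-(1-r/b)*x) := by
      funext x; ring_nf
    rw [this] at h
    rw [h, integral_exp_neg_Ioi]
    ring_nf
  have hrw : (∫ x in Ioi b, b ^ (r - α) * Real.exp (-(1 - r/b) * x) * Real.exp ((1 - r/b) * b))
      = (b ^ (r - α) * Real.exp ((1 - r/b) * b)) * ∫ x in Ioi b, Real.exp (-(1 - r/b) * x) := by
    rw [← integral_const_mul]
    congr 1; funext x; ring
  rw [hrw, hval]
  have hinv : (1 - r/b)⁻¹ ≤ 2 := by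
    rw [inv_le_comm₀ hc two_pos]
    have : r / b ≤ 1/2 := by
      rw [div_le_div_iff₀ hb two_pos]; linarith
    linarith
  have hexp : Real.exp ((1 - r/b) * b) * Real.exp (-(1 - r/b) * b) = 1 := by
    rw [← Real.exp_add]; ring_nf; exact Real.exp_zero
  have hbra : (0:ℝ) ≤ b ^ (r - α) := Real.rpow_nonneg hb.le _
  calc b ^ (r - α) * Real.exp ((1 - r/b) * b) * ((1 - r/b)⁻¹ * Real.exp (-(1-r/b)*b))
      = b ^ (r - α) * (1 - r/b)⁻¹ * (Real.exp ((1 - r/b) * b) * Real.exp (-(1-r/b)*b)) := by ring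
    _ = b ^ (r - α) * (1 - r/b)⁻¹ := by rw [hexp, mul_one]
    _ ≤ b ^ (r - α) * 2 := mul_le_mul_of_nonneg_left hinv hbra
    _ = 2 * b ^ (r - α) := by ring

lemma tail_nonneg (α r b : ℝ) (hb : 0 < b) :
    0 ≤ ∫ x in Ioi b, x ^ r * (b ^ (-α) * Real.exp (b - x)) := by
  apply setIntegral_nonneg measurableSet_Ioi
  intro x hx
  exact tail_integrand_nonneg α r b x hx hb

/-- head integrability -/
lemma head_integrable (α r b : ℝ) (hb : 1 < b) :
    IntegrableOn (fun x => α * x ^ (r - α - 1)) (Ioc 1 b) := by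
  have hcont : ContinuousOn (fun x : ℝ => α * x ^ (r - α - 1)) (Icc 1 b) := by
    apply ContinuousOn.mul continuousOn_const
    apply ContinuousOn.rpow_const continuousOn_id
    intro x hx
    exact Or.inl (by linarith [hx.1] : x ≠ 0)
  exact (hcont.integrableOn_compact isCompact_Icc).mono_set Ioc_subset_Icc_self

/-- head value -/
lemma head_value (α r b : ℝ) (hrα : r < α) (hb : 1 < b) :
    (∫ x in Ioc 1 b, α * x ^ (r - α - 1)) = α * ((b ^ (r - α) - 1) / (r - α)) := by
  rw [MeasureTheory.integral_const_mul, ← intervalIntegral.integral_of_le hb.le]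
  congr 1
  have hne : r - α - 1 ≠ -1 := by intro h; apply absurd (by linarith : r = α) (by linarith)
  have h0 : (0:ℝ) ∉ Set.uIcc 1 b := by
    rw [Set.uIcc_of_le hb.le]
    intro h
    exact absurd h.1 (by norm_num)
  rw [integral_rpow (Or.inr ⟨hne, h0⟩)]
  rw [show r - α - 1 + 1 = r - α by ring, Real.one_rpow]

/-- the splitting -/
lemma moment_split (α r b : ℝ) (hr0 : 0 < r) (hrα : r < α) (hb2 : 2 ≤ b) (hbr : 2*r ≤ b) :
    taperedParetoMoment α r b = α * ((b ^ (r - α) - 1) / (r - α)) +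
      ∫ x in Ioi b, x ^ r * (b ^ (-α) * Real.exp (b - x)) := by
  have hb1 : (1:ℝ) < b := by linarith
  have hb : (0:ℝ) < b := by linarith
  have hrb : r < b := by linarith
  have h1 : IntegrableOn (fun x => x ^ r * taperedParetoDensity α b x) (Ioc 1 b) := by
    apply IntegrableOn.congr_fun ((head_integrable α r b hb1)) _ measurableSet_Ioc
    intro x hx
    have hx1 : 1 < x := hx.1
    have hx0 : 0 < x := by linarith
    simp only [taperedParetoDensity, if_neg (not_lt.mpr hx1.le), if_pos hx.2]
    rw [show r - α - 1 = r + (-α - 1) by ring, Real.rpow_add hx0]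
    ring
  have h2 : IntegrableOn (fun x => x ^ r * taperedParetoDensity α b x) (Ioi b) := by
    apply IntegrableOn.congr_fun (tail_integrable α r b hr0 hrb hb) _ measurableSet_Ioi
    intro x hx
    have hx1 : 1 < x := lt_trans hb1 hx
    simp only [taperedParetoDensity, if_neg (not_lt.mpr hx1.le), if_neg (not_le.mpr (mem_Ioi.mp hx))]
  have hsplit : taperedParetoMoment α r b =
      (∫ x in Ioc 1 b, x ^ r * taperedParetoDensity α b x) +
      ∫ x in Ioi b, x ^ r * taperedParetoDensity α b x := by
    rw [taperedParetoMoment, ← Ioc_union_Ioi_eq_Ioi hb1.le,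
      setIntegral_union (Ioc_disjoint_Ioi le_rfl) measurableSet_Ioi h1 h2]
  rw [hsplit]
  congr 1
  · rw [← head_value α r b hrα hb1]
    apply setIntegral_congr_fun measurableSet_Ioc
    intro x hx
    have hx1 : 1 < x := hx.1
    have hx0 : 0 < x := by linarith
    simp only [taperedParetoDensity, if_neg (not_lt.mpr hx1.le), if_pos hx.2]
    rw [show r - α - 1 = r + (-α - 1) by ring, Real.rpow_add hx0]
    ring
  · apply setIntegral_congr_fun measurableSet_Ioi
    intro x hx
    have hx1 : 1 < x := lt_trans hb1 hx
    simp only [taperedParetoDensity, if_neg (not_lt.mpr hx1.le), if_neg (not_le.mpr (mem_Ioi.mp hx))]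

end TaperedAux

/-- For `0 < r < α`, `μ_r(b) → α/(α - r)` as `b → ∞`. -/
theorem taperedParetoMoment_tendsto_of_lt (α r : ℝ) (hr0 : 0 < r) (hrα : r < α) :
    Tendsto (fun b : ℝ => taperedParetoMoment α r b) atTop (nhds (α / (α - r))) := by
  have hαr : 0 < α - r := by linarith
  have hpow : Tendsto (fun b : ℝ => b ^ (r - α)) atTop (nhds 0) := by
    have := tendsto_rpow_neg_atTop hαr
    simpa [neg_sub] using this
  have hA : Tendsto (fun b : ℝ => α * ((b ^ (r - α) - 1) / (r - α))) atTop
      (nhds (α / (α - r))) := by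
    have h1 : Tendsto (fun b : ℝ => α * ((b ^ (r - α) - 1) / (r - α))) atTop
        (nhds (α * ((0 - 1) / (r - α)))) := by
      exact (((hpow.sub_const 1).div_const (r - α)).const_mul α)
    have h2 : r - α ≠ 0 := by intro h; apply absurd (by linarith : r = α) (by linarith)
    have h3 : α - r ≠ 0 := by linarith
    have heq : α * (((0:ℝ) - 1) / (r - α)) = α / (α - r) := by
      field_simp
      ring
    rwa [heq] at h1
  have hB : Tendsto (fun b : ℝ => ∫ x in Set.Ioi b, x ^ r * (b ^ (-α) * Real.exp (b - x)))
      atTop (nhds 0) := by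
    have hbound : Tendsto (fun b : ℝ => 2 * b ^ (r - α)) atTop (nhds 0) := by
      simpa using hpow.const_mul 2
    apply tendsto_of_tendsto_of_tendsto_of_le_of_le' tendsto_const_nhds hbound
    · filter_upwards [eventually_gt_atTop (0:ℝ)] with b hb
      exact TaperedAux.tail_nonneg α r b hb
    · filter_upwards [eventually_ge_atTop (2:ℝ), eventually_ge_atTop (2*r)] with b hb2 hbr
      exact TaperedAux.tail_bound α r b hr0 hb2 hbr
  have hAB := hA.add hB
  rw [add_zero] at hAB
  apply hAB.congr'
  filter_upwards [eventually_ge_atTop (2:ℝ), eventually_ge_atTop (2*r)] with b hb2 hbr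
  exact (TaperedAux.moment_split α r b hr0 hrα hb2 hbr).symm
end

section
/- If X_1,…,X_n are independent random variables with E X_i = 0 and E|X_i|^κ < ∞ for some 1<κ≤2, then E|∑_{i=1}^n X_i|^κ ≤ 2 ∑_{i=1}^n E|X_i|^κ (von Bahr–Esseen inequality). -/
open MeasureTheory ProbabilityTheory


lemma vbe_hasDerivAt {κ : ℝ} (hκ : 1 < κ) (x : ℝ) :
    HasDerivAt (fun u : ℝ => |u| ^ κ) (κ * Real.sign x * |x| ^ (κ - 1)) x := by
  rcases lt_trichotomy x 0 with hx | hx | hx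
  · have h1 : HasDerivAt (fun u : ℝ => (-u) ^ κ) (κ * (-x) ^ (κ - 1) * (-1)) x :=
      (Real.hasDerivAt_rpow_const (x := -x) (p := κ) (Or.inl (by linarith))).comp x (hasDerivAt_neg x)
    have heq : (fun u : ℝ => |u| ^ κ) =ᶠ[nhds x] fun u : ℝ => (-u) ^ κ := by
      filter_upwards [Iio_mem_nhds hx] with u hu
      rw [abs_of_neg hu]
    have := h1.congr_of_eventuallyEq heq
    refine this.congr_deriv ?_
    rw [Real.sign_of_neg hx, abs_of_neg hx]; ring
  · subst hx
    simp only [Real.sign_zero, mul_zero, zero_mul]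
    rw [hasDerivAt_iff_tendsto_slope]
    have hb : ∀ u : ℝ, u ≠ 0 → ‖slope (fun u : ℝ => |u| ^ κ) 0 u‖ ≤ |u| ^ (κ - 1) := by
      intro u hu
      have hu' : (0:ℝ) < |u| := abs_pos.mpr hu
      rw [slope_def_field]
      have : |u| ^ κ / |u| = |u| ^ (κ - 1) := by
        rw [Real.rpow_sub hu', Real.rpow_one]
      have h0 : |(0:ℝ)| ^ κ = 0 := by
        rw [abs_zero, Real.zero_rpow (by linarith)]
      rw [h0, sub_zero]
      calc ‖|u| ^ κ / (u - 0)‖ = |u| ^ κ / |u| := by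
            rw [sub_zero, norm_div]
            simp [Real.norm_eq_abs, abs_of_nonneg (Real.rpow_nonneg (abs_nonneg u) κ)]
        _ = |u| ^ (κ - 1) := this
        _ ≤ |u| ^ (κ - 1) := le_rfl
    have hg : Filter.Tendsto (fun u : ℝ => |u| ^ (κ - 1)) (nhdsWithin 0 {(0:ℝ)}ᶜ) (nhds 0) := by
      have hc : ContinuousAt (fun u : ℝ => |u| ^ (κ - 1)) 0 := by
        exact (Real.continuousAt_rpow_const _ _ (Or.inr (by linarith))).comp continuous_abs.continuousAt
      have : Filter.Tendsto (fun u : ℝ => |u| ^ (κ - 1)) (nhds 0) (nhds (|(0:ℝ)| ^ (κ - 1))) := hc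
      rw [abs_zero, Real.zero_rpow (by linarith)] at this
      exact this.mono_left nhdsWithin_le_nhds
    exact squeeze_zero_norm' (by filter_upwards [self_mem_nhdsWithin] with u hu using hb u hu) hg
  · have h1 : HasDerivAt (fun u : ℝ => u ^ κ) (κ * x ^ (κ - 1)) x :=
      Real.hasDerivAt_rpow_const (Or.inl (ne_of_gt hx))
    have heq : (fun u : ℝ => |u| ^ κ) =ᶠ[nhds x] fun u : ℝ => u ^ κ := by
      filter_upwards [Ioi_mem_nhds hx] with u hu
      rw [abs_of_pos hu]
    have := h1.congr_of_eventuallyEq heq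
    refine this.congr_deriv ?_
    rw [Real.sign_of_pos hx, abs_of_pos hx]; ring


lemma vbe_rpow_subadd {α : ℝ} (h0 : 0 < α) (h1 : α ≤ 1) {a b : ℝ} (ha : 0 ≤ a) (hb : 0 ≤ b) :
    (a + b) ^ α ≤ a ^ α + b ^ α := by
  have := NNReal.rpow_add_le_add_rpow (a.toNNReal) (b.toNNReal) h0.le h1
  have h2 := (NNReal.coe_le_coe).mpr this
  push_cast at h2
  rwa [Real.coe_toNNReal _ ha, Real.coe_toNNReal _ hb] at h2

lemma vbe_rpow_diff {α : ℝ} (h0 : 0 < α) (h1 : α ≤ 1) {u v : ℝ} (hu : 0 ≤ u) (hv : 0 ≤ v) :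
    u ^ α ≤ v ^ α + |u - v| ^ α := by
  have h : u ≤ v + |u - v| := by
    have := le_abs_self (u - v); linarith
  calc u ^ α ≤ (v + |u - v|) ^ α := Real.rpow_le_rpow hu h h0.le
    _ ≤ v ^ α + |u - v| ^ α := vbe_rpow_subadd h0 h1 hv (abs_nonneg _)

lemma vbe_psi_nonneg {α : ℝ} (h0 : 0 < α) {x : ℝ} (hx : 0 ≤ x) :
    Real.sign x * |x| ^ α = x ^ α := by
  rcases eq_or_lt_of_le hx with h | h
  · rw [← h, Real.sign_zero, zero_mul, Real.zero_rpow (ne_of_gt h0)]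
  · rw [Real.sign_of_pos h, abs_of_pos h, one_mul]

lemma vbe_psi_neg {α : ℝ} (x : ℝ) :
    Real.sign (-x) * |(-x)| ^ α = -(Real.sign x * |x| ^ α) := by
  rw [Real.sign_neg, abs_neg]; ring

lemma vbe_holder {α : ℝ} (h0 : 0 < α) (h1 : α ≤ 1) (a b : ℝ) :
    |Real.sign a * |a| ^ α - Real.sign b * |b| ^ α| ≤ 2 * |a - b| ^ α := by
  -- reduce by symmetry in sign of a
  have key : ∀ a b : ℝ, 0 ≤ a →
      |Real.sign a * |a| ^ α - Real.sign b * |b| ^ α| ≤ 2 * |a - b| ^ α := by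
    intro a b ha
    rcases le_or_gt 0 b with hb | hb
    · rw [vbe_psi_nonneg h0 ha, vbe_psi_nonneg h0 hb]
      rw [abs_sub_le_iff]
      constructor
      · have := vbe_rpow_diff h0 h1 ha hb
        nlinarith [Real.rpow_nonneg (abs_nonneg (a-b)) α]
      · have := vbe_rpow_diff h0 h1 hb ha
        rw [abs_sub_comm] at this
        nlinarith [Real.rpow_nonneg (abs_nonneg (a-b)) α]
    · -- b < 0, a ≥ 0 : sum of two nonneg powers each ≤ (a - b)^α
      rw [vbe_psi_nonneg h0 ha, Real.sign_of_neg hb, abs_of_neg hb, neg_one_mul, sub_neg_eq_add]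
      have hab : (0:ℝ) < a - b := by linarith
      have h2 : a ^ α ≤ (a - b) ^ α := Real.rpow_le_rpow ha (by linarith) h0.le
      have h3 : (-b) ^ α ≤ (a - b) ^ α := Real.rpow_le_rpow (by linarith) (by linarith) h0.le
      rw [abs_of_nonneg (add_nonneg (Real.rpow_nonneg ha α) (Real.rpow_nonneg (by linarith : (0:ℝ) ≤ -b) α)), abs_of_pos hab]
      linarith
  rcases le_or_gt 0 a with ha | ha
  · exact key a b ha
  · have := key (-a) (-b) (by linarith)
    rw [vbe_psi_neg, vbe_psi_neg, neg_sub_neg, neg_sub_neg, abs_sub_comm b a] at this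
    rwa [abs_sub_comm]

lemma vbe_pointwise {κ : ℝ} (hκ1 : 1 < κ) (hκ2 : κ ≤ 2) (x y : ℝ) :
    |x + y| ^ κ ≤ |x| ^ κ + κ * Real.sign x * |x| ^ (κ - 1) * y + 2 * |y| ^ κ := by
  rcases eq_or_ne y 0 with rfl | hy
  · have h0 : (0:ℝ) ^ κ = 0 := Real.zero_rpow (by linarith)
    simp [h0]
  have hκ0 : (0:ℝ) < κ := by linarith
  have hα0 : (0:ℝ) < κ - 1 := by linarith
  have hα1 : κ - 1 ≤ 1 := by linarith
  set F : ℝ → ℝ := fun t => |x + t * y| ^ κ - κ * Real.sign x * |x| ^ (κ - 1) * y * t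
      - 2 * |y| ^ κ * t ^ κ with hF
  -- continuity
  have hcont_abs : Continuous fun u : ℝ => |u| ^ κ :=
    continuous_iff_continuousAt.mpr fun u =>
      (Real.continuousAt_rpow_const _ _ (Or.inr hκ0.le)).comp continuous_abs.continuousAt
  have hcont_pow : Continuous fun t : ℝ => t ^ κ :=
    continuous_iff_continuousAt.mpr fun t => Real.continuousAt_rpow_const _ _ (Or.inr hκ0.le)
  have hFcont : Continuous F := by
    apply Continuous.sub
    apply Continuous.sub
    · exact hcont_abs.comp (by continuity)
    · continuity
    · exact (continuous_const.mul hcont_pow)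
  -- derivative
  have hFderiv : ∀ t ∈ Set.Ioo (0:ℝ) 1, HasDerivAt F
      ((κ * Real.sign (x + t * y) * |x + t * y| ^ (κ - 1)) * y
        - κ * Real.sign x * |x| ^ (κ - 1) * y - 2 * |y| ^ κ * (κ * t ^ (κ - 1))) t := by
    intro t ht
    have h1 : HasDerivAt (fun t : ℝ => x + t * y) y t := by
      simpa using ((hasDerivAt_id t).mul_const y).const_add x
    have h2 : HasDerivAt (fun t : ℝ => |x + t * y| ^ κ)
        ((κ * Real.sign (x + t * y) * |x + t * y| ^ (κ - 1)) * y) t :=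
      by have := (vbe_hasDerivAt hκ1 (x + t * y)).comp t h1; exact this
    have h3 : HasDerivAt (fun t : ℝ => κ * Real.sign x * |x| ^ (κ - 1) * y * t)
        (κ * Real.sign x * |x| ^ (κ - 1) * y) t := by
      simpa using (hasDerivAt_id t).const_mul (κ * Real.sign x * |x| ^ (κ - 1) * y)
    have h4 : HasDerivAt (fun t : ℝ => 2 * |y| ^ κ * t ^ κ)
        (2 * |y| ^ κ * (κ * t ^ (κ - 1))) t :=
      (Real.hasDerivAt_rpow_const (Or.inl (ne_of_gt ht.1))).const_mul (2 * |y| ^ κ)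
    exact (h2.sub h3).sub h4
  have hFanti : AntitoneOn F (Set.Icc 0 1) := by
    apply antitoneOn_of_deriv_nonpos (convex_Icc 0 1) hFcont.continuousOn
    · rw [interior_Icc]
      exact fun t ht => ((hFderiv t ht).differentiableAt).differentiableWithinAt
    · rw [interior_Icc]
      intro t ht
      rw [(hFderiv t ht).deriv]
      have habs : |y| > 0 := abs_pos.mpr hy
      have hkey : (κ * Real.sign (x + t * y) * |x + t * y| ^ (κ - 1)) * y
          - κ * Real.sign x * |x| ^ (κ - 1) * y ≤ 2 * κ * t ^ (κ - 1) * |y| ^ κ := by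
        have h5 : (κ * Real.sign (x + t * y) * |x + t * y| ^ (κ - 1)) * y
            - κ * Real.sign x * |x| ^ (κ - 1) * y
            = κ * ((Real.sign (x + t * y) * |x + t * y| ^ (κ - 1)
                - Real.sign x * |x| ^ (κ - 1)) * y) := by ring
        rw [h5]
        have h6 := vbe_holder hα0 hα1 (x + t * y) x
        have h7 : (Real.sign (x + t * y) * |x + t * y| ^ (κ - 1)
            - Real.sign x * |x| ^ (κ - 1)) * y ≤ 2 * |x + t * y - x| ^ (κ - 1) * |y| := by
          calc _ ≤ |(Real.sign (x + t * y) * |x + t * y| ^ (κ - 1)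
                - Real.sign x * |x| ^ (κ - 1)) * y| := le_abs_self _
            _ = |Real.sign (x + t * y) * |x + t * y| ^ (κ - 1)
                - Real.sign x * |x| ^ (κ - 1)| * |y| := abs_mul _ _
            _ ≤ 2 * |x + t * y - x| ^ (κ - 1) * |y| := by
                apply mul_le_mul_of_nonneg_right h6 (abs_nonneg y)
        have h8 : |x + t * y - x| ^ (κ - 1) = t ^ (κ - 1) * |y| ^ (κ - 1) := by
          have : x + t * y - x = t * y := by ring
          rw [this, abs_mul, abs_of_pos ht.1, Real.mul_rpow ht.1.le (abs_nonneg y)]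
        have h9 : |y| ^ (κ - 1) * |y| = |y| ^ κ := by
          have hh := Real.rpow_add habs (κ - 1) 1
          rw [Real.rpow_one] at hh
          rw [← hh]; norm_num
        calc κ * ((Real.sign (x + t * y) * |x + t * y| ^ (κ - 1)
                - Real.sign x * |x| ^ (κ - 1)) * y)
            ≤ κ * (2 * |x + t * y - x| ^ (κ - 1) * |y|) := by
              apply mul_le_mul_of_nonneg_left h7 hκ0.le
          _ = κ * (2 * (t ^ (κ - 1) * (|y| ^ (κ - 1) * |y|))) := by rw [h8]; ring
          _ = 2 * κ * t ^ (κ - 1) * |y| ^ κ := by rw [h9]; ring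
      nlinarith [hkey]
  have h01 := hFanti (Set.left_mem_Icc.mpr zero_le_one) (Set.right_mem_Icc.mpr zero_le_one) zero_le_one
  have hF0 : F 0 = |x| ^ κ := by
    simp [hF, Real.zero_rpow (ne_of_gt hκ0)]
  have hF1 : F 1 = |x + y| ^ κ - κ * Real.sign x * |x| ^ (κ - 1) * y - 2 * |y| ^ κ := by
    simp [hF, Real.one_rpow]
  rw [hF0, hF1] at h01
  linarith

lemma vbe_sign_abs_le (z : ℝ) : |Real.sign z| ≤ 1 := by
  rcases lt_trichotomy z 0 with h | h | h
  · rw [Real.sign_of_neg h]; norm_num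
  · rw [h, Real.sign_zero]; norm_num
  · rw [Real.sign_of_pos h]; norm_num

lemma vbe_measurable_sign : Measurable Real.sign := by
  unfold Real.sign
  exact Measurable.ite (measurableSet_lt measurable_id measurable_const) measurable_const
    (Measurable.ite (measurableSet_lt measurable_const measurable_id) measurable_const
      measurable_const)

lemma vbe_rpow_le {κ β : ℝ} (hβ : 0 ≤ β) (hβκ : β ≤ κ) (z : ℝ) :
    |z| ^ β ≤ 1 + |z| ^ κ := by
  rcases le_or_gt (|z|) 1 with h | h
  · have : |z| ^ β ≤ 1 := Real.rpow_le_one (abs_nonneg z) h hβ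
    have h2 : 0 ≤ |z| ^ κ := Real.rpow_nonneg (abs_nonneg z) κ
    linarith
  · have : |z| ^ β ≤ |z| ^ κ := Real.rpow_le_rpow_of_exponent_le h.le hβκ
    linarith

lemma vbe_two_rpow {κ : ℝ} (hκ : 0 < κ) {a b : ℝ} (ha : 0 ≤ a) (hb : 0 ≤ b) :
    (a + b) ^ κ ≤ 2 ^ κ * (a ^ κ + b ^ κ) := by
  have key : ∀ a b : ℝ, 0 ≤ a → 0 ≤ b → a ≤ b → (a + b) ^ κ ≤ 2 ^ κ * (a ^ κ + b ^ κ) := by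
    intro a b ha hb hab
    calc (a + b) ^ κ ≤ (2 * b) ^ κ :=
          Real.rpow_le_rpow (by linarith) (by linarith) hκ.le
      _ = 2 ^ κ * b ^ κ := Real.mul_rpow (by norm_num) hb
      _ ≤ 2 ^ κ * (a ^ κ + b ^ κ) := by
          have h1 : 0 ≤ a ^ κ := Real.rpow_nonneg ha κ
          have h2 : (0:ℝ) ≤ 2 ^ κ := Real.rpow_nonneg (by norm_num) κ
          nlinarith
  rcases le_total a b with h | h
  · exact key a b ha hb h
  · have := key b a hb ha h
    rw [add_comm] at this
    linarith [this]

/-- Von Bahr–Esseen inequality: if `X_1, …, X_n` are independent with `E X_i = 0`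
and `E|X_i|^κ < ∞` for some `1 < κ ≤ 2`, then `E|∑ X_i|^κ ≤ 2 ∑ E|X_i|^κ`. -/
theorem von_bahr_esseen
    {Ω : Type*} [MeasureSpace Ω] [IsProbabilityMeasure (ℙ : Measure Ω)]
    (n : ℕ) (X : Fin n → Ω → ℝ) (hmeas : ∀ i, Measurable (X i))
    (hindep : iIndepFun X ℙ)
    (κ : ℝ) (hκ1 : 1 < κ) (hκ2 : κ ≤ 2)
    (hint : ∀ i, Integrable (fun ω => |X i ω| ^ κ) ℙ)
    (hcen : ∀ i, (∫ ω, X i ω) = 0) :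
    (∫ ω, |∑ i, X i ω| ^ κ) ≤ 2 * ∑ i, ∫ ω, |X i ω| ^ κ := by
  classical
  have hκ0 : (0:ℝ) < κ := by linarith
  have hcont_absκ : Continuous fun u : ℝ => |u| ^ κ :=
    continuous_iff_continuousAt.mpr fun u =>
      (Real.continuousAt_rpow_const _ _ (Or.inr hκ0.le)).comp continuous_abs.continuousAt
  have hcont_absα : Continuous fun u : ℝ => |u| ^ (κ - 1) :=
    continuous_iff_continuousAt.mpr fun u =>
      (Real.continuousAt_rpow_const _ _ (Or.inr (by linarith))).comp continuous_abs.continuousAt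
  set ψ : ℝ → ℝ := fun z => Real.sign z * |z| ^ (κ - 1) with hψ
  have hψmeas : Measurable ψ := vbe_measurable_sign.mul hcont_absα.measurable
  -- integrability of X i
  have hXint : ∀ i, Integrable (X i) ℙ := by
    intro i
    refine Integrable.mono ((integrable_const (1:ℝ)).add (hint i))
      (hmeas i).aestronglyMeasurable ?_
    filter_upwards with ω
    have h1 : |X i ω| ^ (1:ℝ) ≤ 1 + |X i ω| ^ κ := vbe_rpow_le zero_le_one hκ1.le _
    rw [Real.rpow_one] at h1
    have h2 : (0:ℝ) ≤ 1 + |X i ω| ^ κ := by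
      have := Real.rpow_nonneg (abs_nonneg (X i ω)) κ; linarith
    simpa [Real.norm_eq_abs, abs_of_nonneg h2] using h1
  -- main induction
  have key : ∀ s : Finset (Fin n),
      Integrable (fun ω => |∑ i ∈ s, X i ω| ^ κ) ℙ ∧
      (∫ ω, |∑ i ∈ s, X i ω| ^ κ) ≤ 2 * ∑ i ∈ s, ∫ ω, |X i ω| ^ κ := by
    intro s
    induction s using Finset.induction_on with
    | empty =>
      constructor
      · simpa [Real.zero_rpow (ne_of_gt hκ0)] using (integrable_const (0:ℝ))
      · simp [Real.zero_rpow (ne_of_gt hκ0)]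
    | @insert a s ha IH =>
      set S : Ω → ℝ := fun ω => ∑ i ∈ s, X i ω with hS
      have hSmeas : Measurable S := Finset.measurable_sum s fun i _ => hmeas i
      have hSκ_int : Integrable (fun ω => |S ω| ^ κ) ℙ := IH.1
      -- independence of S and X a
      have hindepS : IndepFun S (X a) ℙ := by
        have h := hindep.indepFun_finsetSum_of_notMem hmeas ha
        have heq : (∑ j ∈ s, X j) = S := by
          funext ω; simp [hS, Finset.sum_apply]
        rwa [heq] at h
      have hindepψ : IndepFun (fun ω => ψ (S ω)) (X a) ℙ :=
        hindepS.comp hψmeas measurable_id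
      -- integrability of ψ ∘ S
      have hψS_int : Integrable (fun ω => ψ (S ω)) ℙ := by
        refine Integrable.mono ((integrable_const (1:ℝ)).add hSκ_int)
          (hψmeas.comp hSmeas).aestronglyMeasurable ?_
        filter_upwards with ω
        have h1 : |ψ (S ω)| ≤ |S ω| ^ (κ - 1) := by
          rw [hψ]
          have := vbe_sign_abs_le (S ω)
          have h2 : (0:ℝ) ≤ |S ω| ^ (κ - 1) := Real.rpow_nonneg (abs_nonneg _) _
          calc |Real.sign (S ω) * |S ω| ^ (κ - 1)|
              = |Real.sign (S ω)| * |(|S ω| ^ (κ - 1))| := abs_mul _ _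
            _ ≤ 1 * |S ω| ^ (κ - 1) := by
                rw [abs_of_nonneg h2]
                exact mul_le_mul_of_nonneg_right this h2
            _ = |S ω| ^ (κ - 1) := one_mul _
        have h3 : |S ω| ^ (κ - 1) ≤ 1 + |S ω| ^ κ := vbe_rpow_le (by linarith) (by linarith) _
        have h4 : (0:ℝ) ≤ 1 + |S ω| ^ κ := by
          have := Real.rpow_nonneg (abs_nonneg (S ω)) κ; linarith
        simp only [Pi.add_apply]
        rw [Real.norm_eq_abs, Real.norm_eq_abs, abs_of_nonneg h4]
        linarith
      -- product integrable
      have hprod_int : Integrable (fun ω => ψ (S ω) * X a ω) ℙ := by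
        have := hindepψ.integrable_mul hψS_int (hXint a)
        exact this
      -- cross term vanishes
      have hcross : (∫ ω, ψ (S ω) * X a ω) = 0 := by
        have h := hindepψ.integral_fun_mul_eq_mul_integral (hψmeas.comp hSmeas).aestronglyMeasurable
          (hmeas a).aestronglyMeasurable
        have h2 : (∫ ω, ψ (S ω) * X a ω) = (∫ ω, ψ (S ω)) * ∫ ω, X a ω := by
          simpa [Pi.mul_apply] using h
        rw [h2, hcen a, mul_zero]
      -- integrability of the new sum's power
      have hsum_eq : ∀ ω, ∑ i ∈ insert a s, X i ω = X a ω + S ω := by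
        intro ω; rw [Finset.sum_insert ha]
      have hnew_int : Integrable (fun ω => |∑ i ∈ insert a s, X i ω| ^ κ) ℙ := by
        refine Integrable.mono (((hint a).add hSκ_int).const_mul (2 ^ κ))
          ?_ ?_
        · exact (hcont_absκ.measurable.comp
            (Finset.measurable_sum _ fun i _ => hmeas i)).aestronglyMeasurable
        · filter_upwards with ω
          simp only [Pi.add_apply]
          have h1 : |X a ω + S ω| ^ κ ≤ (|X a ω| + |S ω|) ^ κ :=
            Real.rpow_le_rpow (abs_nonneg _) (abs_add_le _ _) hκ0.le
          have h2 := vbe_two_rpow hκ0 (abs_nonneg (X a ω)) (abs_nonneg (S ω))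
          have h3 : (0:ℝ) ≤ |X a ω| ^ κ + |S ω| ^ κ :=
            add_nonneg (Real.rpow_nonneg (abs_nonneg _) _) (Real.rpow_nonneg (abs_nonneg _) _)
          have h4 : (0:ℝ) ≤ 2 ^ κ := Real.rpow_nonneg (by norm_num) κ
          have e1 : ‖|∑ i ∈ insert a s, X i ω| ^ κ‖ = |X a ω + S ω| ^ κ := by
            rw [hsum_eq ω]
            exact Real.norm_of_nonneg (Real.rpow_nonneg (abs_nonneg _) _)
          have e2 : ‖2 ^ κ * (|X a ω| ^ κ + |S ω| ^ κ)‖ = 2 ^ κ * (|X a ω| ^ κ + |S ω| ^ κ) :=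
            Real.norm_of_nonneg (mul_nonneg h4 h3)
          rw [e1, e2]
          exact h1.trans h2
      constructor
      · exact hnew_int
      -- the estimate
      have hmid_int : Integrable (fun ω => κ * (ψ (S ω) * X a ω)) ℙ := hprod_int.const_mul κ
      have hthird_int : Integrable (fun ω => 2 * |X a ω| ^ κ) ℙ := (hint a).const_mul 2
      have hrhs_int : Integrable (fun ω => κ * (ψ (S ω) * X a ω) + 2 * |X a ω| ^ κ) ℙ :=
        hmid_int.add hthird_int
      have hrhsfull_int : Integrable
          (fun ω => |S ω| ^ κ + (κ * (ψ (S ω) * X a ω) + 2 * |X a ω| ^ κ)) ℙ :=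
        hSκ_int.add hrhs_int
      have hstep : (∫ ω, |∑ i ∈ insert a s, X i ω| ^ κ)
          ≤ ∫ ω, (|S ω| ^ κ + (κ * (ψ (S ω) * X a ω) + 2 * |X a ω| ^ κ)) := by
        refine integral_mono hnew_int hrhsfull_int ?_
        intro ω
        dsimp only
        rw [hsum_eq ω, add_comm (X a ω) (S ω)]
        have e := vbe_pointwise hκ1 hκ2 (S ω) (X a ω)
        have hψe : ψ (S ω) = Real.sign (S ω) * |S ω| ^ (κ - 1) := rfl
        rw [hψe]
        exact e.trans_eq (by ring)
      have hint_eq : (∫ ω, (|S ω| ^ κ + (κ * (ψ (S ω) * X a ω) + 2 * |X a ω| ^ κ)))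
          = (∫ ω, |S ω| ^ κ) + (κ * (∫ ω, ψ (S ω) * X a ω) + 2 * ∫ ω, |X a ω| ^ κ) := by
        rw [integral_add hSκ_int hrhs_int,
          integral_add hmid_int hthird_int, integral_const_mul, integral_const_mul]
      rw [Finset.sum_insert ha]
      have h2s := IH.2
      rw [hint_eq, hcross] at hstep
      calc (∫ ω, |∑ i ∈ insert a s, X i ω| ^ κ)
          ≤ (∫ ω, |S ω| ^ κ) + (κ * 0 + 2 * ∫ ω, |X a ω| ^ κ) := hstep
        _ ≤ 2 * ∑ i ∈ s, (∫ ω, |X i ω| ^ κ) + 2 * ∫ ω, |X a ω| ^ κ := by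
            rw [mul_zero, zero_add]; linarith
        _ = 2 * ((∫ ω, |X a ω| ^ κ) + ∑ i ∈ s, ∫ ω, |X i ω| ^ κ) := by ring
  have := (key Finset.univ).2
  simpa using this
end
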